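/- Let (X, A, Y) be random variables with A ∈ {0,1}, and let p(x) = E[A | X = x] ∈ (0,1), b(x) = E[Y | A = 1, X = x]. For any measurable functions p* with p*(X) > 0 a.s. and b*, define H(p*, b*) = (A/p*(X)) Y − (A/p*(X)) b*(X) + b*(X). Then E[H(p*, b*)] − E[(A/p(X))Y] = E[ (p(X)/p*(X) − 1)(b(X) − b*(X)) ]. In particular E[H(p*, b*)] = E[(A/p(X))Y] whenever p* = p a.s. or b* = b a.s. -/

import Mathlib

open MeasureTheory Filter

/-- For a bounded `mX`-strongly-measurable `f` and integrable `h`,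
`∫ f·(h − E[h|mX]) = 0`. -/
lemma integral_bdd_mul_sub_condexp
    {Ω : Type*} {mΩ : MeasurableSpace Ω} (μ : Measure Ω) [IsProbabilityMeasure μ]
    {mX : MeasurableSpace Ω} (hmX : mX ≤ mΩ)
    {f h : Ω → ℝ} (hf : StronglyMeasurable[mX] f) {C : ℝ}
    (hbd : ∀ ω, ‖f ω‖ ≤ C) (hh : Integrable h μ) :
    ∫ ω, f ω * (h ω - (μ[h|mX]) ω) ∂μ = 0 := by
  have hfm : AEStronglyMeasurable[mΩ] f μ := (hf.mono hmX).aestronglyMeasurable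
  have h1 : Integrable (fun ω => f ω * h ω) μ := hh.bdd_mul hfm (Eventually.of_forall hbd)
  have h2 : Integrable (fun ω => f ω * (μ[h|mX]) ω) μ :=
    integrable_condExp.bdd_mul hfm (Eventually.of_forall hbd)
  have hsplit : (fun ω => f ω * (h ω - (μ[h|mX]) ω))
      = fun ω => f ω * h ω - f ω * (μ[h|mX]) ω := funext fun ω => mul_sub _ _ _
  rw [hsplit, integral_sub h1 h2]
  have key : ∫ ω, f ω * h ω ∂μ = ∫ ω, f ω * (μ[h|mX]) ω ∂μ := by
    calc ∫ ω, f ω * h ω ∂μ = ∫ ω, (μ[(fun ω => f ω * h ω)|mX]) ω ∂μ :=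
          (integral_condExp hmX).symm
      _ = ∫ ω, f ω * (μ[h|mX]) ω ∂μ := by
          refine integral_congr_ae ?_
          have := condExp_mul_of_stronglyMeasurable_left (μ := μ) hf (g := h) h1 hh
          exact this
  rw [key, sub_self]

/-- Doubly robust identity for the counterfactual mean `ψ₀ = E[(A/p(X))Y]`.
`mX` is the σ-algebra generated by the covariates `X`; the propensity score is
`p` (so `E[A | X] = p` a.e.) and the outcome regression `b` satisfies
`E[A·Y | X] = p·b` a.e. (equivalent to `b = E[Y | A = 1, X]` since `A` is binary). -/
theorem doubly_robust_identity
    {Ω : Type*} {mΩ : MeasurableSpace Ω} (μ : Measure Ω) [IsProbabilityMeasure μ]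
    (mX : MeasurableSpace Ω) (hmX : mX ≤ mΩ)
    (A Y p b pstar bstar : Ω → ℝ)
    (hA : ∀ ω, A ω = 0 ∨ A ω = 1)
    -- p, b, p*, b* are functions of X :
    (hpm : Measurable[mX] p) (hbm : Measurable[mX] b)
    (hpsm : Measurable[mX] pstar) (hbsm : Measurable[mX] bstar)
    -- p(X) = E[A | X] with 0 < p(X) < 1, p*(X) > 0 :
    (hp : μ[A | mX] =ᵐ[μ] p)
    (hp01 : ∀ᵐ ω ∂μ, 0 < p ω ∧ p ω < 1)
    (hps : ∀ᵐ ω ∂μ, 0 < pstar ω)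
    -- b(X) = E[Y | A = 1, X], i.e. E[A·Y | X] = p(X)·b(X) :
    (hb : μ[fun ω => A ω * Y ω | mX] =ᵐ[μ] fun ω => p ω * b ω)
    -- integrability of all quantities appearing below :
    (hint1 : Integrable (fun ω => A ω / pstar ω * Y ω
              - A ω / pstar ω * bstar ω + bstar ω) μ)
    (hint2 : Integrable (fun ω => A ω / p ω * Y ω) μ)
    (hint3 : Integrable (fun ω => (p ω / pstar ω - 1) * (b ω - bstar ω)) μ)
    (hAY : Integrable (fun ω => A ω * Y ω) μ) (hAint : Integrable A μ) :
    ((∫ ω, (A ω / pstar ω * Y ω - A ω / pstar ω * bstar ω + bstar ω) ∂μ)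
        - ∫ ω, A ω / p ω * Y ω ∂μ
      = ∫ ω, (p ω / pstar ω - 1) * (b ω - bstar ω) ∂μ) ∧
    ((pstar =ᵐ[μ] p ∨ bstar =ᵐ[μ] b) →
      (∫ ω, (A ω / pstar ω * Y ω - A ω / pstar ω * bstar ω + bstar ω) ∂μ)
        = ∫ ω, A ω / p ω * Y ω ∂μ) := by
  classical
  set F1 : Ω → ℝ := fun ω => A ω / pstar ω * Y ω - A ω / pstar ω * bstar ω + bstar ω with hF1
  set F2 : Ω → ℝ := fun ω => A ω / p ω * Y ω with hF2
  set T : Ω → ℝ := fun ω => (p ω / pstar ω - 1) * (b ω - bstar ω) with hT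
  set c₁ : Ω → ℝ := fun ω => 1 / pstar ω - 1 / p ω with hc₁
  set c₂ : Ω → ℝ := fun ω => -(bstar ω / pstar ω) with hc₂
  set AYf : Ω → ℝ := fun ω => A ω * Y ω with hAYf
  set W : Ω → ℝ := fun ω =>
    c₁ ω * (AYf ω - (μ[AYf|mX]) ω) + c₂ ω * (A ω - (μ[A|mX]) ω) with hW
  -- measurability of c₁, c₂ wrt mX
  have hc1m : Measurable[mX] c₁ := (measurable_const.div hpsm).sub (measurable_const.div hpm)
  have hc2m : Measurable[mX] c₂ := (hbsm.div hpsm).neg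
  -- a.e. identity : F1 - F2 - T = W
  have haeW : (fun ω => F1 ω - F2 ω - T ω) =ᵐ[μ] W := by
    filter_upwards [hp, hb, hp01, hps] with ω h1 h2 h3 h4
    have hp0 : p ω ≠ 0 := ne_of_gt h3.1
    have hps0 : pstar ω ≠ 0 := ne_of_gt h4
    simp only [hF1, hF2, hT, hW, hc₁, hc₂, hAYf, h1, h2]
    field_simp
    rw [show μ[fun ω => A ω * Y ω | mX] ω = p ω * b ω from h2]
    ring
  have hWint : Integrable W μ :=
    (((hint1.sub hint2).sub hint3).congr haeW)
  -- the truncation sets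
  set S : ℕ → Set Ω := fun n => {ω | |c₁ ω| ≤ (n : ℝ) ∧ |c₂ ω| ≤ (n : ℝ)} with hS
  have hSmX : ∀ n, MeasurableSet[mX] (S n) := fun n =>
    (measurableSet_le hc1m.abs measurable_const).inter
      (measurableSet_le hc2m.abs measurable_const)
  have hD1 : Integrable (fun ω => AYf ω - (μ[AYf|mX]) ω) μ := hAY.sub integrable_condExp
  have hD2 : Integrable (fun ω => A ω - (μ[A|mX]) ω) μ := hAint.sub integrable_condExp
  -- each truncated integral vanishes
  have hzero : ∀ n : ℕ, ∫ ω, (S n).indicator W ω ∂μ = 0 := by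
    intro n
    have hptw : (S n).indicator W = fun ω =>
        ((S n).indicator c₁ ω) * (AYf ω - (μ[AYf|mX]) ω)
          + ((S n).indicator c₂ ω) * (A ω - (μ[A|mX]) ω) := by
      funext ω
      by_cases hω : ω ∈ S n
      · simp [Set.indicator_of_mem hω, hW]
      · simp [Set.indicator_of_notMem hω]
    have hb1 : ∀ ω, ‖(S n).indicator c₁ ω‖ ≤ (n : ℝ) := by
      intro ω
      by_cases hω : ω ∈ S n
      · simpa [Set.indicator_of_mem hω, Real.norm_eq_abs] using hω.1
      · simp [Set.indicator_of_notMem hω]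
    have hb2 : ∀ ω, ‖(S n).indicator c₂ ω‖ ≤ (n : ℝ) := by
      intro ω
      by_cases hω : ω ∈ S n
      · simpa [Set.indicator_of_mem hω, Real.norm_eq_abs] using hω.2
      · simp [Set.indicator_of_notMem hω]
    have hm1 : StronglyMeasurable[mX] ((S n).indicator c₁) :=
      hc1m.stronglyMeasurable.indicator (hSmX n)
    have hm2 : StronglyMeasurable[mX] ((S n).indicator c₂) :=
      hc2m.stronglyMeasurable.indicator (hSmX n)
    have hi1 : Integrable (fun ω => ((S n).indicator c₁ ω) * (AYf ω - (μ[AYf|mX]) ω)) μ :=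
      hD1.bdd_mul (hm1.mono hmX).aestronglyMeasurable (Eventually.of_forall hb1)
    have hi2 : Integrable (fun ω => ((S n).indicator c₂ ω) * (A ω - (μ[A|mX]) ω)) μ :=
      hD2.bdd_mul (hm2.mono hmX).aestronglyMeasurable (Eventually.of_forall hb2)
    rw [hptw, integral_add hi1 hi2,
      integral_bdd_mul_sub_condexp μ hmX hm1 hb1 hAY,
      integral_bdd_mul_sub_condexp μ hmX hm2 hb2 hAint, add_zero]
  -- dominated convergence : ∫ W = 0
  have hWzero : ∫ ω, W ω ∂μ = 0 := by
    have hconv : Tendsto (fun n : ℕ => ∫ ω, (S n).indicator W ω ∂μ) atTop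
        (nhds (∫ ω, W ω ∂μ)) := by
      refine tendsto_integral_of_dominated_convergence (fun ω => ‖W ω‖)
        (fun n => hWint.1.indicator (hmX _ (hSmX n))) hWint.norm
        (fun n => Eventually.of_forall fun ω => norm_indicator_le_norm_self _ _) ?_
      refine Eventually.of_forall fun ω => ?_
      obtain ⟨N, hN⟩ := exists_nat_ge (max |c₁ ω| |c₂ ω|)
      refine tendsto_const_nhds.congr' ?_
      filter_upwards [eventually_ge_atTop N] with n hn
      have hω : ω ∈ S n := by
        constructor
        · exact le_trans (le_trans (le_max_left _ _) hN) (by exact_mod_cast hn)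
        · exact le_trans (le_trans (le_max_right _ _) hN) (by exact_mod_cast hn)
      simp [Set.indicator_of_mem hω]
    have : Tendsto (fun _ : ℕ => (0 : ℝ)) atTop (nhds (∫ ω, W ω ∂μ)) := by
      simpa [hzero] using hconv
    exact tendsto_nhds_unique this tendsto_const_nhds
  -- Part 1
  have part1 : (∫ ω, F1 ω ∂μ) - ∫ ω, F2 ω ∂μ = ∫ ω, T ω ∂μ := by
    rw [← integral_sub hint1 hint2]
    have heq : (fun ω => F1 ω - F2 ω) =ᵐ[μ] fun ω => T ω + W ω := by
      filter_upwards [haeW] with ω hω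
      linarith [hω]
    rw [integral_congr_ae heq, integral_add hint3 hWint, hWzero, add_zero]
  refine ⟨part1, ?_⟩
  rintro (hcase | hcase)
  · have hT0 : T =ᵐ[μ] 0 := by
      filter_upwards [hcase, hp01] with ω h1 h2
      simp [hT, h1, div_self (ne_of_gt h2.1)]
    have : ∫ ω, T ω ∂μ = 0 := by
      rw [integral_congr_ae hT0]; simp
    have := part1.trans this
    linarith [this]
  · have hT0 : T =ᵐ[μ] 0 := by
      filter_upwards [hcase] with ω h1
      simp [hT, h1]
    have : ∫ ω, T ω ∂μ = 0 := by
      rw [integral_congr_ae hT0]; simp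
    have := part1.trans this
    linarith [this]
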